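/- In the deterministic bilinear game with square invertible B and step size η ∈ (0, 1/√(λ_max(BᵀB))], the averaged extragradient iterates satisfy ‖x̄_{K-1}‖² + ‖ȳ_{K-1}‖² ≤ 4/(η²K²·λ_min(BBᵀ)(1 + η²λ_min(BBᵀ)))·(‖x_0‖² + ‖y_0‖²), for all K ≥ 1, where x̄, ȳ are the iterate averages. -/

import Mathlib

open Matrix

noncomputable def lamMax {k : ℕ} {A : Matrix (Fin k) (Fin k) ℝ} (hA : A.IsHermitian) : ℝ :=
  ⨆ i, hA.eigenvalues i

noncomputable def lamMin {k : ℕ} {A : Matrix (Fin k) (Fin k) ℝ} (hA : A.IsHermitian) : ℝ :=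
  ⨅ i, hA.eigenvalues i

private lemma dot_nonneg' {n : ℕ} (v : Fin n → ℝ) : 0 ≤ v ⬝ᵥ v :=
  Finset.sum_nonneg fun _ _ => mul_self_nonneg _

private lemma dot_cs' {n : ℕ} (u w : Fin n → ℝ) : (u ⬝ᵥ w)^2 ≤ (u ⬝ᵥ u) * (w ⬝ᵥ w) := by
  have h := real_inner_mul_inner_self_le (F := EuclideanSpace ℝ (Fin n))
    ((WithLp.equiv 2 _).symm u) ((WithLp.equiv 2 _).symm w)
  rw [PiLp.inner_apply, PiLp.inner_apply, PiLp.inner_apply] at h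
  simpa [PiLp.inner_apply, RCLike.inner_apply, dotProduct, sq, mul_comm] using h

private lemma adj_dot {n : ℕ} (A : Matrix (Fin n) (Fin n) ℝ) (u w : Fin n → ℝ) :
    (A *ᵥ u) ⬝ᵥ w = u ⬝ᵥ (Aᵀ *ᵥ w) := by
  rw [dotProduct_comm, dotProduct_mulVec, mulVec_transpose, dotProduct_comm]

private lemma dot_pos' {n : ℕ} {v : Fin n → ℝ} (hv : v ≠ 0) : 0 < v ⬝ᵥ v :=
  lt_of_le_of_ne (dot_nonneg' v) fun h => hv (dotProduct_self_eq_zero.mp h.symm)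

private lemma sub_dot_le {n : ℕ} (a c : Fin n → ℝ) :
    (a - c) ⬝ᵥ (a - c) ≤ 2*(a ⬝ᵥ a) + 2*(c ⬝ᵥ c) := by
  have h := dot_nonneg' (a + c)
  simp only [dotProduct_add, add_dotProduct, dotProduct_sub, sub_dotProduct] at *
  linarith

private lemma quad_bounds {n : ℕ} {A : Matrix (Fin n) (Fin n) ℝ} (hA : A.IsHermitian)
    (v : Fin n → ℝ) {c : ℝ} :
    ((∀ i, c ≤ hA.eigenvalues i) → c * (v ⬝ᵥ v) ≤ v ⬝ᵥ (A *ᵥ v)) ∧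
    ((∀ i, hA.eigenvalues i ≤ c) → v ⬝ᵥ (A *ᵥ v) ≤ c * (v ⬝ᵥ v)) := by
  set b := hA.eigenvectorBasis with hb
  set eqv := WithLp.equiv 2 (Fin n → ℝ) with heq
  set v' : EuclideanSpace ℝ (Fin n) := eqv.symm v with hv'
  have hinner : ∀ w u : EuclideanSpace ℝ (Fin n),
      inner (𝕜 := ℝ) w u = (eqv w) ⬝ᵥ (eqv u) := by
    intro w u
    simp [PiLp.inner_apply, RCLike.inner_apply, dotProduct, heq, mul_comm]
  have hAsymm : Aᵀ = A := by
    have := hA.eq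
    rwa [conjTranspose_eq_transpose_of_trivial] at this
  have hAv : ∀ i, (eqv (b i)) ⬝ᵥ (A *ᵥ v) = hA.eigenvalues i * ((eqv (b i)) ⬝ᵥ v) := by
    intro i
    rw [dotProduct_mulVec, ← mulVec_transpose, hAsymm]
    have h2 : A *ᵥ (eqv (b i)) = hA.eigenvalues i • (eqv (b i)) := by
      have := hA.mulVec_eigenvectorBasis i
      exact this
    rw [h2, smul_dotProduct, smul_eq_mul]
  have e1 : v ⬝ᵥ (A *ᵥ v) = ∑ i, hA.eigenvalues i * ((eqv (b i)) ⬝ᵥ v)^2 := by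
    have h0 : v ⬝ᵥ (A *ᵥ v) = inner (𝕜 := ℝ) v' (eqv.symm (A *ᵥ v)) := by
      rw [hinner, hv']; simp only [Equiv.apply_symm_apply]
    rw [h0, ← b.sum_inner_mul_inner v' (eqv.symm (A *ᵥ v))]
    refine Finset.sum_congr rfl fun i _ => ?_
    rw [hinner, hinner, hv']
    simp only [Equiv.apply_symm_apply]
    rw [hAv i, dotProduct_comm v]
    ring
  have e2 : v ⬝ᵥ v = ∑ i, ((eqv (b i)) ⬝ᵥ v)^2 := by
    have h0 : v ⬝ᵥ v = inner (𝕜 := ℝ) v' v' := by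
      rw [hinner, hv']; simp only [Equiv.apply_symm_apply]
    rw [h0, ← b.sum_inner_mul_inner v' v']
    refine Finset.sum_congr rfl fun i _ => ?_
    rw [hinner, hinner, hv']
    simp only [Equiv.apply_symm_apply]
    rw [dotProduct_comm v]
    ring
  constructor
  · intro h
    rw [e1, e2, Finset.mul_sum]
    exact Finset.sum_le_sum fun i _ => mul_le_mul_of_nonneg_right (h i) (sq_nonneg _)
  · intro h
    rw [e1, e2, Finset.mul_sum]
    exact Finset.sum_le_sum fun i _ => mul_le_mul_of_nonneg_right (h i) (sq_nonneg _)

/-- Deterministic bilinear game with square invertible `B` and step size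
`η ∈ (0, 1/√(λ_max(BᵀB))]`: the averaged extragradient iterates satisfy
`‖x̄_{K-1}‖² + ‖ȳ_{K-1}‖² ≤ 4/(η²K²λ_min(BBᵀ)(1 + η²λ_min(BBᵀ)))·(‖x_0‖² + ‖y_0‖²)`. -/
theorem stmt17 (n : ℕ) (B : Matrix (Fin n) (Fin n) ℝ) (hB : IsUnit B.det)
    (η : ℝ) (hη0 : 0 < η)
    (hBBT : (B * Bᵀ).IsHermitian) (hBTB : (Bᵀ * B).IsHermitian)
    (hηle : η ≤ 1 / Real.sqrt (lamMax hBTB))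
    (x : ℕ → Fin n → ℝ) (y : ℕ → Fin n → ℝ)
    (hx : ∀ t : ℕ, 1 ≤ t →
      x t = x (t - 1) - η ^ 2 • (B * Bᵀ).mulVec (x (t - 1)) - η • B.mulVec (y (t - 1)))
    (hy : ∀ t : ℕ, 1 ≤ t →
      y t = y (t - 1) - η ^ 2 • (Bᵀ * B).mulVec (y (t - 1)) + η • Bᵀ.mulVec (x (t - 1))) :
    ∀ K : ℕ, 1 ≤ K →
      ((K : ℝ)⁻¹ • ∑ t ∈ Finset.range K, x t) ⬝ᵥ ((K : ℝ)⁻¹ • ∑ t ∈ Finset.range K, x t) +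
        ((K : ℝ)⁻¹ • ∑ t ∈ Finset.range K, y t) ⬝ᵥ ((K : ℝ)⁻¹ • ∑ t ∈ Finset.range K, y t)
      ≤ 4 / (η ^ 2 * (K : ℝ) ^ 2 * (lamMin hBBT * (1 + η ^ 2 * lamMin hBBT))) *
          (x 0 ⬝ᵥ x 0 + y 0 ⬝ᵥ y 0) := by
  intro K hK
  rcases Nat.eq_zero_or_pos n with hn | hn
  · subst hn
    simp [dotProduct]
  haveI : Nonempty (Fin n) := ⟨⟨0, hn⟩⟩
  set M := B * Bᵀ with hM
  set N := Bᵀ * B with hN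
  set m := lamMin hBBT with hmdef
  set Lv := lamMax hBTB with hLdef
  have hm_eq : m = iInf hBBT.eigenvalues := rfl
  have hL_eq : Lv = iSup hBTB.eigenvalues := rfl
  -- basic identities
  have idM : ∀ v : Fin n → ℝ, v ⬝ᵥ (M *ᵥ v) = (Bᵀ *ᵥ v) ⬝ᵥ (Bᵀ *ᵥ v) := by
    intro v
    rw [hM, ← mulVec_mulVec, dotProduct_comm, adj_dot]
  have idN : ∀ v : Fin n → ℝ, v ⬝ᵥ (N *ᵥ v) = (B *ᵥ v) ⬝ᵥ (B *ᵥ v) := by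
    intro v
    rw [hN, ← mulVec_mulVec, dotProduct_comm, adj_dot, transpose_transpose]
  -- injectivity
  have hTinj : ∀ z : Fin n → ℝ, Bᵀ *ᵥ z = 0 → z = 0 := by
    intro z h0
    have h1 : (Bᵀ)⁻¹ *ᵥ (Bᵀ *ᵥ z) = z := by
      rw [mulVec_mulVec, nonsing_inv_mul _ (by rwa [det_transpose]), one_mulVec]
    rw [h0, mulVec_zero] at h1
    exact h1.symm
  have hBinj : ∀ z : Fin n → ℝ, B *ᵥ z = 0 → z = 0 := by
    intro z h0
    have h1 : B⁻¹ *ᵥ (B *ᵥ z) = z := by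
      rw [mulVec_mulVec, nonsing_inv_mul _ hB, one_mulVec]
    rw [h0, mulVec_zero] at h1
    exact h1.symm
  -- positive definiteness
  have hMpd : M.PosDef := by
    refine Matrix.PosDef.of_dotProduct_mulVec_pos hBBT fun z hz => ?_
    have hs : star z = z := by simp
    rw [hs, idM]
    exact dot_pos' fun h0 => hz (hTinj z h0)
  have hNpd : N.PosDef := by
    refine Matrix.PosDef.of_dotProduct_mulVec_pos hBTB fun z hz => ?_
    have hs : star z = z := by simp
    rw [hs, idN]
    exact dot_pos' fun h0 => hz (hBinj z h0)
  -- eigenvalue bounds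
  have hm_pos : 0 < m := by
    obtain ⟨i, -, hi⟩ := Finset.exists_min_image Finset.univ hBBT.eigenvalues
      ⟨Classical.arbitrary _, Finset.mem_univ _⟩
    rw [hm_eq]
    exact lt_of_lt_of_le (hMpd.eigenvalues_pos i)
      (le_ciInf fun j => hi j (Finset.mem_univ j))
  have hL_pos : 0 < Lv := by
    rw [hL_eq]
    exact lt_of_lt_of_le (hNpd.eigenvalues_pos (Classical.arbitrary _))
      (le_ciSup (Set.Finite.bddAbove (Set.finite_range _)) _)
  have hm_le : ∀ v : Fin n → ℝ, m * (v ⬝ᵥ v) ≤ v ⬝ᵥ (M *ᵥ v) := fun v =>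
    (quad_bounds hBBT v).1 fun i =>
      hm_eq ▸ ciInf_le (Set.Finite.bddBelow (Set.finite_range _)) i
  have hL_ge : ∀ v : Fin n → ℝ, v ⬝ᵥ (N *ᵥ v) ≤ Lv * (v ⬝ᵥ v) := fun v =>
    (quad_bounds hBTB v).2 fun i =>
      hL_eq ▸ le_ciSup (Set.Finite.bddAbove (Set.finite_range _)) i
  have hη2L : η^2 * Lv ≤ 1 := by
    have hs : 0 < Real.sqrt Lv := Real.sqrt_pos.mpr hL_pos
    have h1 : η * Real.sqrt Lv ≤ 1 := (le_div_iff₀ hs).mp hηle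
    have h2 : (η * Real.sqrt Lv)^2 ≤ 1 := by nlinarith [mul_pos hη0 hs]
    calc η^2 * Lv = (η * Real.sqrt Lv)^2 := by
          rw [mul_pow, Real.sq_sqrt hL_pos.le]
      _ ≤ 1 := h2
  -- derived singular-value-type bounds
  have hlbT : ∀ v : Fin n → ℝ, m * (v ⬝ᵥ v) ≤ (Bᵀ *ᵥ v) ⬝ᵥ (Bᵀ *ᵥ v) := fun v =>
    (idM v) ▸ hm_le v
  have hubB : ∀ v : Fin n → ℝ, (B *ᵥ v) ⬝ᵥ (B *ᵥ v) ≤ Lv * (v ⬝ᵥ v) := fun v =>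
    (idN v) ▸ hL_ge v
  have hubT : ∀ v : Fin n → ℝ, (Bᵀ *ᵥ v) ⬝ᵥ (Bᵀ *ᵥ v) ≤ Lv * (v ⬝ᵥ v) := by
    intro v
    set w := Bᵀ *ᵥ v with hw
    rcases eq_or_ne w 0 with h | h
    · rw [h]
      simp only [zero_dotProduct]
      exact mul_nonneg hL_pos.le (dot_nonneg' v)
    · have h1 : v ⬝ᵥ (B *ᵥ w) = w ⬝ᵥ w := by
        rw [dotProduct_comm, adj_dot, ← hw]
      have hcs := dot_cs' v (B *ᵥ w)
      rw [h1] at hcs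
      have h2 := hubB w
      have hwpos := dot_pos' h
      nlinarith [dot_nonneg' v, mul_le_mul_of_nonneg_left h2 (dot_nonneg' v)]
  have hlbB : ∀ v : Fin n → ℝ, m * (v ⬝ᵥ v) ≤ (B *ᵥ v) ⬝ᵥ (B *ᵥ v) := by
    intro v
    rcases eq_or_ne v 0 with rfl | h
    · simp
    · set w := (B⁻¹)ᵀ *ᵥ v with hwdef
      have hw : Bᵀ *ᵥ w = v := by
        rw [hwdef, mulVec_mulVec, ← transpose_mul, nonsing_inv_mul _ hB, transpose_one,
          one_mulVec]
      have h1 : m * (w ⬝ᵥ w) ≤ v ⬝ᵥ v := by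
        have := hlbT w
        rwa [hw] at this
      have h2 : v ⬝ᵥ v = w ⬝ᵥ (B *ᵥ v) := by
        conv_lhs => rw [← hw]
        rw [adj_dot, transpose_transpose, hw]
      have hcs := dot_cs' w (B *ᵥ v)
      rw [← h2] at hcs
      have hv := dot_pos' h
      nlinarith [dot_nonneg' w, dot_nonneg' (B *ᵥ v),
        mul_le_mul_of_nonneg_right h1 (dot_nonneg' (B *ᵥ v))]
  -- cross-term cancellation identity
  have key : ∀ a c : Fin n → ℝ,
      (η • (M *ᵥ a) + B *ᵥ c) ⬝ᵥ (η • (M *ᵥ a) + B *ᵥ c)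
        + (Bᵀ *ᵥ a - η • (N *ᵥ c)) ⬝ᵥ (Bᵀ *ᵥ a - η • (N *ᵥ c))
      = (Bᵀ *ᵥ a) ⬝ᵥ (Bᵀ *ᵥ a) + η^2 * ((M *ᵥ a) ⬝ᵥ (M *ᵥ a))
        + (B *ᵥ c) ⬝ᵥ (B *ᵥ c) + η^2 * ((N *ᵥ c) ⬝ᵥ (N *ᵥ c)) := by
    intro a c
    have hcross : (M *ᵥ a) ⬝ᵥ (B *ᵥ c) = (Bᵀ *ᵥ a) ⬝ᵥ (N *ᵥ c) := by
      rw [hM, hN, ← mulVec_mulVec, ← mulVec_mulVec, adj_dot]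
    have hc2 : (B *ᵥ c) ⬝ᵥ (M *ᵥ a) = (N *ᵥ c) ⬝ᵥ (Bᵀ *ᵥ a) := by
      rw [dotProduct_comm, hcross, dotProduct_comm]
    simp only [dotProduct_add, add_dotProduct, dotProduct_sub, sub_dotProduct,
      dotProduct_smul, smul_dotProduct, smul_eq_mul]
    linear_combination η * hcross + η * hc2
  -- one-step nonexpansiveness
  have step : ∀ a c : Fin n → ℝ,
      (a - η^2 • (M *ᵥ a) - η • (B *ᵥ c)) ⬝ᵥ (a - η^2 • (M *ᵥ a) - η • (B *ᵥ c))
        + (c - η^2 • (N *ᵥ c) + η • (Bᵀ *ᵥ a)) ⬝ᵥ (c - η^2 • (N *ᵥ c) + η • (Bᵀ *ᵥ a))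
      ≤ a ⬝ᵥ a + c ⬝ᵥ c := by
    intro a c
    have e1 : a ⬝ᵥ (M *ᵥ a) = (Bᵀ *ᵥ a) ⬝ᵥ (Bᵀ *ᵥ a) := idM a
    have e1' : (M *ᵥ a) ⬝ᵥ a = (Bᵀ *ᵥ a) ⬝ᵥ (Bᵀ *ᵥ a) := by
      rw [dotProduct_comm]; exact idM a
    have e2 : c ⬝ᵥ (N *ᵥ c) = (B *ᵥ c) ⬝ᵥ (B *ᵥ c) := idN c
    have e2' : (N *ᵥ c) ⬝ᵥ c = (B *ᵥ c) ⬝ᵥ (B *ᵥ c) := by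
      rw [dotProduct_comm]; exact idN c
    have e3 : a ⬝ᵥ (B *ᵥ c) = c ⬝ᵥ (Bᵀ *ᵥ a) := by rw [dotProduct_comm, adj_dot]
    have e3' : (B *ᵥ c) ⬝ᵥ a = c ⬝ᵥ (Bᵀ *ᵥ a) := by rw [adj_dot]
    have e3'' : (Bᵀ *ᵥ a) ⬝ᵥ c = c ⬝ᵥ (Bᵀ *ᵥ a) := dotProduct_comm _ _
    have e4 : (M *ᵥ a) ⬝ᵥ (B *ᵥ c) = (Bᵀ *ᵥ a) ⬝ᵥ (N *ᵥ c) := by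
      rw [hM, hN, ← mulVec_mulVec, ← mulVec_mulVec, adj_dot]
    have e4' : (B *ᵥ c) ⬝ᵥ (M *ᵥ a) = (Bᵀ *ᵥ a) ⬝ᵥ (N *ᵥ c) := by
      rw [dotProduct_comm]; exact e4
    have e4'' : (N *ᵥ c) ⬝ᵥ (Bᵀ *ᵥ a) = (Bᵀ *ᵥ a) ⬝ᵥ (N *ᵥ c) := dotProduct_comm _ _
    have hMa : (M *ᵥ a) ⬝ᵥ (M *ᵥ a) ≤ Lv * ((Bᵀ *ᵥ a) ⬝ᵥ (Bᵀ *ᵥ a)) := by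
      have h := hubB (Bᵀ *ᵥ a)
      rwa [mulVec_mulVec, ← hM] at h
    have hNc : (N *ᵥ c) ⬝ᵥ (N *ᵥ c) ≤ Lv * ((B *ᵥ c) ⬝ᵥ (B *ᵥ c)) := by
      have h := hubT (B *ᵥ c)
      rwa [mulVec_mulVec, ← hN] at h
    have s1 : η^4 * ((M *ᵥ a) ⬝ᵥ (M *ᵥ a)) ≤ η^2 * ((Bᵀ *ᵥ a) ⬝ᵥ (Bᵀ *ᵥ a)) := by
      have t1 := mul_le_mul_of_nonneg_left hMa (sq_nonneg η)
      have t1' := mul_le_mul_of_nonneg_left t1 (sq_nonneg η)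
      have t2 := mul_le_mul_of_nonneg_right hη2L (dot_nonneg' (Bᵀ *ᵥ a))
      have t3 := mul_le_mul_of_nonneg_left t2 (sq_nonneg η)
      linarith only [t1', t3]
    have s2 : η^4 * ((N *ᵥ c) ⬝ᵥ (N *ᵥ c)) ≤ η^2 * ((B *ᵥ c) ⬝ᵥ (B *ᵥ c)) := by
      have t1 := mul_le_mul_of_nonneg_left hNc (sq_nonneg η)
      have t1' := mul_le_mul_of_nonneg_left t1 (sq_nonneg η)
      have t2 := mul_le_mul_of_nonneg_right hη2L (dot_nonneg' (B *ᵥ c))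
      have t3 := mul_le_mul_of_nonneg_left t2 (sq_nonneg η)
      linarith only [t1', t3]
    simp only [dotProduct_add, add_dotProduct, dotProduct_sub, sub_dotProduct,
      dotProduct_smul, smul_dotProduct, smul_eq_mul]
    rw [e1, e1', e2, e2', e3, e3', e3'', e4, e4', e4'']
    linarith only [s1, s2]
  -- recurrences in convenient form
  have hxs : ∀ t : ℕ, x (t+1) = x t - η^2 • (M *ᵥ x t) - η • (B *ᵥ y t) := fun t => by
    simpa using hx (t+1) (Nat.le_add_left 1 t)
  have hys : ∀ t : ℕ, y (t+1) = y t - η^2 • (N *ᵥ y t) + η • (Bᵀ *ᵥ x t) := fun t => by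
    simpa using hy (t+1) (Nat.le_add_left 1 t)
  -- monotonicity of the squared norms
  have mono : ∀ t : ℕ, (x t) ⬝ᵥ (x t) + (y t) ⬝ᵥ (y t)
      ≤ (x 0) ⬝ᵥ (x 0) + (y 0) ⬝ᵥ (y 0) := by
    intro t
    induction t with
    | zero => exact le_refl _
    | succ k ih =>
      refine le_trans ?_ ih
      rw [hxs k, hys k]
      exact step (x k) (y k)
  -- telescoping sums
  set S := ∑ t ∈ Finset.range K, x t with hS
  set T := ∑ t ∈ Finset.range K, y t with hT
  have hMsum : M *ᵥ S = ∑ t ∈ Finset.range K, M *ᵥ x t := by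
    rw [hS]; simp only [← mulVecLin_apply]; exact map_sum M.mulVecLin x (Finset.range K)
  have hBsum : B *ᵥ T = ∑ t ∈ Finset.range K, B *ᵥ y t := by
    rw [hT]; simp only [← mulVecLin_apply]; exact map_sum B.mulVecLin y (Finset.range K)
  have hNsum : N *ᵥ T = ∑ t ∈ Finset.range K, N *ᵥ y t := by
    rw [hT]; simp only [← mulVecLin_apply]; exact map_sum N.mulVecLin y (Finset.range K)
  have hTsum : Bᵀ *ᵥ S = ∑ t ∈ Finset.range K, Bᵀ *ᵥ x t := by
    rw [hS]; simp only [← mulVecLin_apply]; exact map_sum Bᵀ.mulVecLin x (Finset.range K)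
  have telx : x 0 - x K = η^2 • (M *ᵥ S) + η • (B *ᵥ T) := by
    have h1 : ∑ t ∈ Finset.range K, (x (t+1) - x t) = x K - x 0 :=
      Finset.sum_range_sub x K
    have h2 : ∑ t ∈ Finset.range K, (x (t+1) - x t)
        = -(η^2 • (M *ᵥ S) + η • (B *ᵥ T)) := by
      calc ∑ t ∈ Finset.range K, (x (t+1) - x t)
          = ∑ t ∈ Finset.range K, (-(η^2 • (M *ᵥ x t) + η • (B *ᵥ y t))) :=
            Finset.sum_congr rfl fun t _ => by rw [hxs t]; abel
        _ = -(∑ t ∈ Finset.range K, (η^2 • (M *ᵥ x t) + η • (B *ᵥ y t))) := by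
            rw [Finset.sum_neg_distrib]
        _ = -(η^2 • (M *ᵥ S) + η • (B *ᵥ T)) := by
            rw [hMsum, hBsum, Finset.smul_sum, Finset.smul_sum, ← Finset.sum_add_distrib]
    rw [h2] at h1
    rw [neg_eq_iff_eq_neg] at h1
    rw [h1]
    abel
  have tely : y 0 - y K = η^2 • (N *ᵥ T) - η • (Bᵀ *ᵥ S) := by
    have h1 : ∑ t ∈ Finset.range K, (y (t+1) - y t) = y K - y 0 :=
      Finset.sum_range_sub y K
    have h2 : ∑ t ∈ Finset.range K, (y (t+1) - y t)
        = -(η^2 • (N *ᵥ T) - η • (Bᵀ *ᵥ S)) := by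
      calc ∑ t ∈ Finset.range K, (y (t+1) - y t)
          = ∑ t ∈ Finset.range K, (-(η^2 • (N *ᵥ y t) - η • (Bᵀ *ᵥ x t))) :=
            Finset.sum_congr rfl fun t _ => by rw [hys t]; abel
        _ = -(∑ t ∈ Finset.range K, (η^2 • (N *ᵥ y t) - η • (Bᵀ *ᵥ x t))) := by
            rw [Finset.sum_neg_distrib]
        _ = -(η^2 • (N *ᵥ T) - η • (Bᵀ *ᵥ S)) := by
            rw [hNsum, hTsum, Finset.smul_sum, Finset.smul_sum, ← Finset.sum_sub_distrib]
    rw [h2] at h1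
    rw [neg_eq_iff_eq_neg] at h1
    rw [h1]
    abel
  -- assemble the lower bound
  set P := η • (M *ᵥ S) + B *ᵥ T with hP
  set Q := Bᵀ *ᵥ S - η • (N *ᵥ T) with hQ
  have hPu : x 0 - x K = η • P := by rw [telx, hP]; module
  have hQv : y 0 - y K = -(η • Q) := by rw [tely, hQ]; module
  have hnorm : (x 0 - x K) ⬝ᵥ (x 0 - x K) + (y 0 - y K) ⬝ᵥ (y 0 - y K)
      = η^2 * (P ⬝ᵥ P + Q ⬝ᵥ Q) := by
    rw [hPu, hQv]
    simp only [neg_dotProduct, dotProduct_neg, smul_dotProduct, dotProduct_smul,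
      smul_eq_mul, neg_neg]
    ring
  have inner : m * (1 + η^2*m) * (S ⬝ᵥ S + T ⬝ᵥ T)
      ≤ (Bᵀ *ᵥ S) ⬝ᵥ (Bᵀ *ᵥ S) + η^2 * ((M *ᵥ S) ⬝ᵥ (M *ᵥ S))
        + (B *ᵥ T) ⬝ᵥ (B *ᵥ T) + η^2 * ((N *ᵥ T) ⬝ᵥ (N *ᵥ T)) := by
    have b1 : m * (S ⬝ᵥ S) ≤ (Bᵀ *ᵥ S) ⬝ᵥ (Bᵀ *ᵥ S) := hlbT S
    have b2 : m * (m * (S ⬝ᵥ S)) ≤ (M *ᵥ S) ⬝ᵥ (M *ᵥ S) := by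
      have u1 := hlbB (Bᵀ *ᵥ S)
      rw [mulVec_mulVec, ← hM] at u1
      have u2 := mul_le_mul_of_nonneg_left b1 hm_pos.le
      linarith
    have b3 : m * (T ⬝ᵥ T) ≤ (B *ᵥ T) ⬝ᵥ (B *ᵥ T) := hlbB T
    have b4 : m * (m * (T ⬝ᵥ T)) ≤ (N *ᵥ T) ⬝ᵥ (N *ᵥ T) := by
      have u1 := hlbT (B *ᵥ T)
      rw [mulVec_mulVec, ← hN] at u1
      have u2 := mul_le_mul_of_nonneg_left b3 hm_pos.le
      linarith
    nlinarith [mul_le_mul_of_nonneg_left b2 (sq_nonneg η),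
      mul_le_mul_of_nonneg_left b4 (sq_nonneg η), b1, b3]
  have upper : (x 0 - x K) ⬝ᵥ (x 0 - x K) + (y 0 - y K) ⬝ᵥ (y 0 - y K)
      ≤ 4 * ((x 0) ⬝ᵥ (x 0) + (y 0) ⬝ᵥ (y 0)) := by
    have u1 := sub_dot_le (x 0) (x K)
    have u2 := sub_dot_le (y 0) (y K)
    have u3 := mono K
    linarith
  have main : η^2 * (m * (1 + η^2*m) * (S ⬝ᵥ S + T ⬝ᵥ T))
      ≤ 4 * ((x 0) ⬝ᵥ (x 0) + (y 0) ⬝ᵥ (y 0)) := by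
    have h1 : η^2 * (m * (1 + η^2*m) * (S ⬝ᵥ S + T ⬝ᵥ T)) ≤ η^2 * (P ⬝ᵥ P + Q ⬝ᵥ Q) := by
      refine mul_le_mul_of_nonneg_left ?_ (sq_nonneg η)
      rw [hP, hQ, key S T]
      linarith [inner]
    calc η^2 * (m * (1 + η^2*m) * (S ⬝ᵥ S + T ⬝ᵥ T)) ≤ η^2 * (P ⬝ᵥ P + Q ⬝ᵥ Q) := h1
      _ = (x 0 - x K) ⬝ᵥ (x 0 - x K) + (y 0 - y K) ⬝ᵥ (y 0 - y K) := hnorm.symm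
      _ ≤ 4 * ((x 0) ⬝ᵥ (x 0) + (y 0) ⬝ᵥ (y 0)) := upper
  -- final division step
  have hKpos : (0:ℝ) < (K:ℝ) := by exact_mod_cast hK
  have hden : (0:ℝ) < η^2 * (K:ℝ)^2 * (m * (1 + η^2*m)) := by
    have h1 : (0:ℝ) < 1 + η^2*m := by nlinarith [sq_nonneg η]
    have := mul_pos (mul_pos (pow_pos hη0 2) (pow_pos hKpos 2)) (mul_pos hm_pos h1)
    exact this
  simp only [smul_dotProduct, dotProduct_smul, smul_eq_mul]
  rw [div_mul_eq_mul_div, le_div_iff₀ hden]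
  have hexp : ((K:ℝ)⁻¹ * ((K:ℝ)⁻¹ * (S ⬝ᵥ S)) + (K:ℝ)⁻¹ * ((K:ℝ)⁻¹ * (T ⬝ᵥ T)))
      * (η^2 * (K:ℝ)^2 * (m * (1 + η^2*m)))
      = η^2 * (m * (1 + η^2*m) * (S ⬝ᵥ S + T ⬝ᵥ T)) := by
    field_simp
  rw [hexp]
  linarith [main]
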